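/- Let q be a prime, G a group, and g an element of G with orderOf g = q. Let t be a natural number and a : Fin (t+1) → ZMod q a family of polynomial coefficients, with public commitments X_k = g^{(a_k).val} for 0 ≤ k ≤ t. Then for every natural number j and every x : ZMod q, the verification equation g^{x.val} = ∏_{k=0}^{t} (X_k)^{j^k} holds if and only if x = ∑_{k=0}^{t} a_k · (j : ZMod q)^k, i.e., if and only if x is the correct sub-share f(j) of the committed polynomial f(z) = ∑_k a_k z^k. -/
import Mathlib

/-- Feldman VSS sub-share verification: the check
`g ^ x.val = ∏ k, (X k) ^ (j ^ k)` with commitments `X k = g ^ (a k).val`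
holds iff `x` equals the correct sub-share `f(j) = ∑ k, a k * j ^ k`. -/
theorem feldman_subshare_verification (q t : ℕ) [Fact q.Prime]
    {G : Type*} [CommGroup G] (g : G) (hg : orderOf g = q)
    (a : Fin (t + 1) → ZMod q) (X : Fin (t + 1) → G)
    (hX : ∀ k, X k = g ^ (a k).val)
    (j : ℕ) (x : ZMod q) :
    g ^ x.val = ∏ k : Fin (t + 1), (X k) ^ (j ^ (k : ℕ)) ↔
      x = ∑ k : Fin (t + 1), a k * (j : ZMod q) ^ (k : ℕ) := by
  have hprod : ∏ k : Fin (t + 1), (X k) ^ (j ^ (k : ℕ))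
      = g ^ (∑ k : Fin (t + 1), (a k).val * j ^ (k : ℕ)) := by
    rw [Finset.prod_congr rfl (fun k _ => by rw [hX k, ← pow_mul]),
      ← Finset.prod_pow_eq_pow_sum]
  rw [hprod, pow_eq_pow_iff_modEq, hg, ← ZMod.natCast_eq_natCast_iff]
  push_cast [ZMod.natCast_val, ZMod.cast_id]
  constructor <;> intro h <;> simpa using h
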